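/- Let p be a prime (playing the role of d), let l ≥ 0, m ≥ 1 be integers, and let f : ℤ_p → ℤ_p be a 1-Lipschitz function such that for every n ≥ 0 the reduced van der Put coefficient b^f_n equals the image in ℚ_p of some rational number belonging to P^{l,m}. Then for every k ≥ 0 and every integer m' with 0 ≤ m' < p^k, the section h of f at the vertex (k, m') satisfies: for every integer i with 0 ≤ i < p, the coefficient b^h_i equals the image in ℚ_p of some rational number belonging to A^{l,m}_k. -/

import Mathlib

/-- The van der Put coefficients of `f : ℤ_p → ℤ_p`:
`B^f_n = f(n)` for `0 ≤ n < p` and `B^f_n = f(n) - f(n mod p^⌊log_p n⌋)` for `n ≥ p`. -/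
noncomputable def vdpB (p : ℕ) [Fact p.Prime] (f : PadicInt p → PadicInt p) (n : ℕ) :
    PadicInt p :=
  if n < p then f n else f n - f ((n % p ^ Nat.log p n : ℕ))

/-- `h` is the section of `f` at the vertex `(k, m)`: for some integer `0 ≤ r < p^k`,
`f(m + p^k·y) = r + p^k·h(y)` for all `y ∈ ℤ_p`. -/
def IsSection (p : ℕ) [Fact p.Prime] (f h : PadicInt p → PadicInt p) (k m : ℕ) : Prop :=
  ∃ r : ℕ, r < p ^ k ∧ ∀ y : PadicInt p,
    f ((m : PadicInt p) + (p : PadicInt p) ^ k * y)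
      = (r : PadicInt p) + (p : PadicInt p) ^ k * h y

/-- `P^{l,m} = { i + j·d^l/(1 - d^m) : 0 ≤ i < d^l, 0 ≤ j < d^m } ⊆ ℚ`. -/
def Pset (d l m : ℕ) : Set ℚ :=
  {q | ∃ i j : ℤ, 0 ≤ i ∧ i < (d : ℤ) ^ l ∧ 0 ≤ j ∧ j < (d : ℤ) ^ m ∧
    q = (i : ℚ) + (j : ℚ) * (d : ℚ) ^ l / (1 - (d : ℚ) ^ m)}

/-- `A^{l,m}_0 = P^{l,m}` and `A^{l,m}_{s+1} = σ(A^{l,m}_s) + P^{l,m}`, where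
`σ(q) = (q - r)/d` for the unique integer `0 ≤ r < d` with `(q - r)/d ∈ Z_{d,0}`
(i.e. with denominator coprime to `d`). -/
def Aset (d l m : ℕ) : ℕ → Set ℚ
  | 0 => Pset d l m
  | s + 1 =>
    {q | ∃ a ∈ Aset d l m s, ∃ b ∈ Pset d l m, ∃ r : ℤ, 0 ≤ r ∧ r < (d : ℤ) ∧
      (((a - (r : ℚ)) / (d : ℚ)).den).Coprime d ∧ q = (a - (r : ℚ)) / (d : ℚ) + b}


variable {p : ℕ} [hp : Fact p.Prime]

lemma pz_ne_zero : (p : PadicInt p) ≠ 0 := by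
  exact_mod_cast hp.out.ne_zero

lemma cancel_ppow {n : ℕ} {x y : PadicInt p} (h : (p : PadicInt p) ^ n * x = (p : PadicInt p) ^ n * y) : x = y :=
  mul_left_cancel₀ (pow_ne_zero n pz_ne_zero) h

lemma den_coprime (q : ℚ) (h : ‖(q : ℚ_[p])‖ ≤ 1) : q.den.Coprime p := by
  by_contra hcop
  have hdvd : p ∣ q.den := by
    by_contra hd
    exact hcop (Nat.Coprime.symm ((Nat.Prime.coprime_iff_not_dvd hp.out).mpr hd))
  have hnum : ¬ (p : ℤ) ∣ q.num := by
    intro hn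
    have h1 : p ∣ q.num.natAbs := Int.natCast_dvd_natCast.mp (by simpa using (Int.dvd_natAbs.mpr hn))
    have := Nat.dvd_gcd h1 hdvd
    rw [q.reduced] at this
    exact hp.out.one_lt.ne' (Nat.dvd_one.mp this)
  have hden0 : ((q.den : ℤ) : ℚ_[p]) ≠ 0 := by
    have : (q.den : ℚ_[p]) ≠ 0 := Nat.cast_ne_zero.mpr q.den_nz
    exact_mod_cast this
  have hcast : (q : ℚ_[p]) = (q.num : ℚ_[p]) / ((q.den : ℤ) : ℚ_[p]) := by
    rw [Rat.cast_def]
    norm_cast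
  have hnnorm : ‖(q.num : ℚ_[p])‖ = 1 := by
    rcases lt_or_eq_of_le (Padic.norm_int_le_one (p := p) q.num) with h1 | h1
    · exact absurd ((Padic.norm_intCast_lt_one_iff (k := q.num)).mp h1) hnum
    · exact h1
  have hdnorm : ‖((q.den : ℤ) : ℚ_[p])‖ < 1 :=
    (Padic.norm_intCast_lt_one_iff).mpr (Int.natCast_dvd_natCast.mpr hdvd)
  have hd0 : 0 < ‖((q.den : ℤ) : ℚ_[p])‖ := norm_pos_iff.mpr hden0
  rw [hcast, norm_div, hnnorm] at h
  have : (1:ℝ) ≤ ‖((q.den : ℤ) : ℚ_[p])‖ := by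
    rw [div_le_one hd0] at h
    exact h
  linarith

-- log of a + p*n
lemma log_a_add_pn (a n : ℕ) (ha : a < p) (hn : 1 ≤ n) :
    Nat.log p (a + p * n) = Nat.log p n + 1 := by
  have hp1 : 1 < p := hp.out.one_lt
  apply Nat.log_eq_of_pow_le_of_lt_pow
  · calc p ^ (Nat.log p n + 1) = p ^ Nat.log p n * p := by ring
    _ ≤ n * p := Nat.mul_le_mul_right p (Nat.pow_log_le_self p (by omega))
    _ = p * n := Nat.mul_comm n p
    _ ≤ a + p * n := Nat.le_add_left _ _
  · have h2 : n < p ^ (Nat.log p n + 1) := Nat.lt_pow_succ_log_self hp1 n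
    calc a + p * n < p * (n + 1) := by rw [Nat.mul_add, Nat.mul_one]; omega
    _ ≤ p * p ^ (Nat.log p n + 1) := Nat.mul_le_mul_left p (by omega)
    _ = p ^ (Nat.log p n + 1 + 1) := by ring

lemma mod_a_add_pn (a n : ℕ) (ha : a < p) (hn : 1 ≤ n) :
    (a + p * n) % p ^ Nat.log p (a + p * n) = a + p * (n % p ^ Nat.log p n) := by
  have hp1 : 1 < p := hp.out.one_lt
  set L := Nat.log p n with hL
  rw [log_a_add_pn a n ha hn]
  have hsplit : n = n % p ^ L + p ^ L * (n / p ^ L) := (Nat.mod_add_div n (p ^ L)).symm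
  have hmod : n % p ^ L < p ^ L := Nat.mod_lt n ((Nat.pow_pos (by omega) : 0 < p ^ L))
  have hsmall : a + p * (n % p ^ L) < p ^ (L + 1) := by
    have : p * (n % p ^ L + 1) ≤ p * p ^ L := Nat.mul_le_mul_left p (by omega)
    calc a + p * (n % p ^ L) < p * (n % p ^ L + 1) := by rw [Nat.mul_add, Nat.mul_one]; omega
    _ ≤ p * p ^ L := this
    _ = p ^ (L + 1) := by ring
  calc (a + p * n) % p ^ (L + 1)
      = (a + p * (n % p ^ L) + p ^ (L + 1) * (n / p ^ L)) % p ^ (L + 1) := by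
        congr 1
        nth_rewrite 1 [hsplit]
        ring
    _ = (a + p * (n % p ^ L)) % p ^ (L + 1) := by
        rw [Nat.add_mul_mod_self_left]
    _ = a + p * (n % p ^ L) := Nat.mod_eq_of_lt hsmall

lemma isSection_lip {f h : PadicInt p → PadicInt p} {k m : ℕ}
    (hf : ∀ x y, ‖f x - f y‖ ≤ ‖x - y‖) (hs : IsSection p f h k m) :
    ∀ x y, ‖h x - h y‖ ≤ ‖x - y‖ := by
  obtain ⟨r, -, hr⟩ := hs
  intro x y
  have e : (p : PadicInt p) ^ k * (h x - h y)
      = f ((m : PadicInt p) + (p : PadicInt p) ^ k * x)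
        - f ((m : PadicInt p) + (p : PadicInt p) ^ k * y) := by
    rw [hr, hr]; ring
  have h1 := hf ((m : PadicInt p) + (p : PadicInt p) ^ k * x)
    ((m : PadicInt p) + (p : PadicInt p) ^ k * y)
  rw [show ((m : PadicInt p) + (p : PadicInt p) ^ k * x) - ((m : PadicInt p) + (p : PadicInt p) ^ k * y)
      = (p : PadicInt p) ^ k * (x - y) by ring, ← e, norm_mul, norm_mul] at h1
  have hp0 : 0 < ‖(p : PadicInt p) ^ k‖ := norm_pos_iff.mpr (pow_ne_zero _ pz_ne_zero)
  exact le_of_mul_le_mul_left h1 hp0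

lemma exists_section_one (f : PadicInt p → PadicInt p)
    (hf : ∀ x y, ‖f x - f y‖ ≤ ‖x - y‖) (a : ℕ) :
    ∃ g, IsSection p f g 1 a := by
  have hplt : ‖(p : PadicInt p)‖ < 1 := by
    rw [PadicInt.norm_p]
    rw [inv_lt_one_iff₀]
    right
    exact_mod_cast hp.out.one_lt
  have key : ∀ y : PadicInt p, ∃ c : PadicInt p,
      f ((a : PadicInt p) + (p : PadicInt p) * y) - (((f a).appr 1 : ℕ) : PadicInt p)
        = (p : PadicInt p) * c := by
    intro y
    have h1 : (p : PadicInt p) ∣ (f ((a : PadicInt p) + (p : PadicInt p) * y) - f a) := by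
      rw [← PadicInt.norm_lt_one_iff_dvd]
      have h2 := hf ((a : PadicInt p) + (p : PadicInt p) * y) a
      rw [add_sub_cancel_left] at h2
      calc ‖f ((a : PadicInt p) + (p : PadicInt p) * y) - f a‖
          ≤ ‖(p : PadicInt p) * y‖ := h2
        _ = ‖(p : PadicInt p)‖ * ‖y‖ := norm_mul _ _
        _ ≤ ‖(p : PadicInt p)‖ * 1 := by
            exact mul_le_mul_of_nonneg_left (PadicInt.norm_le_one y) (norm_nonneg _)
        _ < 1 := by rw [mul_one]; exact hplt
    have h2 : (p : PadicInt p) ∣ (f a - (((f a).appr 1 : ℕ) : PadicInt p)) := by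
      have h3 := (f (a : PadicInt p)).appr_spec 1
      rw [Ideal.mem_span_singleton, pow_one] at h3
      exact h3
    have h4 := dvd_add h1 h2
    rw [sub_add_sub_cancel] at h4
    exact h4
  choose g hg using key
  refine ⟨g, (f a).appr 1, by simpa using (f (a : PadicInt p)).appr_lt 1, fun y => ?_⟩
  rw [pow_one]
  linear_combination hg y

lemma section_decompose {f h : PadicInt p → PadicInt p} {k m' : ℕ}
    (hf : ∀ x y, ‖f x - f y‖ ≤ ‖x - y‖)
    (hs : IsSection p f h (k + 1) m') :
    ∃ g, IsSection p f g 1 (m' % p) ∧ IsSection p g h k (m' / p) := by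
  obtain ⟨g, hg⟩ := exists_section_one f hf (m' % p)
  refine ⟨g, hg, ?_⟩
  obtain ⟨r1, hr1, hgeq⟩ := hg
  obtain ⟨r, hr, hreq⟩ := hs
  rw [pow_one] at hgeq
  -- the main pointwise identity
  have main : ∀ y : PadicInt p,
      ((r1 : ℕ) : PadicInt p) + (p : PadicInt p) * g (((m' / p : ℕ) : PadicInt p) + (p : PadicInt p) ^ k * y)
        = ((r : ℕ) : PadicInt p) + (p : PadicInt p) ^ (k + 1) * h y := by
    intro y
    rw [← hgeq, ← hreq]
    congr 1
    have hmd : ((m' % p : ℕ) : PadicInt p) + (p : PadicInt p) * ((m' / p : ℕ) : PadicInt p)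
        = (m' : PadicInt p) := by
      exact_mod_cast congrArg (Nat.cast : ℕ → PadicInt p) (Nat.mod_add_div m' p)
    rw [← hmd]
    ring
  -- divisibility of r - r1 by p
  have h0 := main 0
  have hdvdZp : (p : PadicInt p) ∣ ((((r : ℤ) - (r1 : ℤ)) : ℤ) : PadicInt p) :=
    ⟨g (((m' / p : ℕ) : PadicInt p) + (p : PadicInt p) ^ k * 0) - (p : PadicInt p) ^ k * h 0, by
      push_cast
      linear_combination -h0⟩
  have hdvd : (p : ℤ) ∣ ((r : ℤ) - (r1 : ℤ)) :=
    (PadicInt.norm_int_lt_one_iff_dvd _).mp ((PadicInt.norm_lt_one_iff_dvd _).mpr hdvdZp)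
  obtain ⟨c, hc⟩ := hdvd
  rw [pow_one] at hr1
  have hppos : (0:ℤ) < (p:ℤ) := by exact_mod_cast hp.out.pos
  have hc0 : 0 ≤ c := by nlinarith [hc, hr1]
  have hclt : c < (p:ℤ) ^ k := by
    have h1 : (p:ℤ) * c < (p:ℤ) * (p:ℤ) ^ k := by
      have : ((r:ℤ)) < (p:ℤ) ^ (k+1) := by exact_mod_cast hr
      calc (p:ℤ) * c = (r:ℤ) - r1 := hc.symm
      _ ≤ (r:ℤ) := by omega
      _ < (p:ℤ) ^ (k+1) := this
      _ = (p:ℤ) * (p:ℤ) ^ k := by ring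
    exact lt_of_mul_lt_mul_left h1 (le_of_lt hppos)
  refine ⟨c.toNat, ?_, fun y => ?_⟩
  · have : (c.toNat : ℤ) < ((p ^ k : ℕ) : ℤ) := by
      rw [Int.toNat_of_nonneg hc0]; exact_mod_cast hclt
    exact_mod_cast this
  · have hy := main y
    have hrcast : ((r : ℕ) : PadicInt p)
        = ((r1 : ℕ) : PadicInt p) + (p : PadicInt p) * ((c.toNat : ℕ) : PadicInt p) := by
      have h2 : ((r:ℤ) : PadicInt p) = ((r1:ℤ) : PadicInt p) + (p : PadicInt p) * (((c.toNat : ℤ)) : PadicInt p) := by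
        rw [Int.toNat_of_nonneg hc0]
        push_cast
        have h3 : ((r:ℤ) : PadicInt p) - ((r1:ℤ) : PadicInt p) = (p:PadicInt p) * (c : PadicInt p) := by
          exact_mod_cast congrArg (Int.cast : ℤ → PadicInt p) hc
        push_cast at h3
        linear_combination h3
      exact_mod_cast h2
    rw [hrcast] at hy
    have : (p:PadicInt p) ^ 1 * g (((m' / p : ℕ) : PadicInt p) + (p : PadicInt p) ^ k * y)
        = (p:PadicInt p) ^ 1 * (((c.toNat : ℕ) : PadicInt p) + (p : PadicInt p) ^ k * h y) := by
      rw [pow_one]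
      ring_nf
      ring_nf at hy
      linear_combination hy
    exact cancel_ppow this

def GoodC (p l m : ℕ) [Fact p.Prime] (g : PadicInt p → PadicInt p) (s : ℕ) : Prop :=
  ∃ bg : ℕ → PadicInt p,
    (∀ n, (p : PadicInt p) ^ Nat.log p n * bg n = vdpB p g n) ∧
    (∀ n, n < p → ∃ q ∈ Aset p l m s, (bg n : ℚ_[p]) = (q : ℚ_[p])) ∧
    (∀ n, p ≤ n → ∃ q ∈ Pset p l m, (bg n : ℚ_[p]) = (q : ℚ_[p]))

lemma zero_mem_Pset (d l m : ℕ) (hd : 0 < d) : (0 : ℚ) ∈ Pset d l m := by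
  refine ⟨0, 0, le_refl _, ?_, le_refl _, ?_, by norm_num⟩
  · exact pow_pos (by exact_mod_cast hd) l
  · exact pow_pos (by exact_mod_cast hd) m

lemma good_step {l m : ℕ} {f g : PadicInt p → PadicInt p} {s a : ℕ} (ha : a < p)
    (hgood : GoodC p l m f s) (hsec : IsSection p f g 1 a) :
    GoodC p l m g (s + 1) := by
  obtain ⟨bf, hbf, hA, hPp⟩ := hgood
  obtain ⟨r1, hr1, hgeq⟩ := hsec
  rw [pow_one] at hr1
  have hnat : ∀ n : ℕ, f ((a + p * n : ℕ) : PadicInt p)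
      = (r1 : PadicInt p) + (p : PadicInt p) * g ((n : ℕ) : PadicInt p) := by
    intro n
    have h1 := hgeq ((n : ℕ) : PadicInt p)
    rw [pow_one] at h1
    push_cast
    exact h1
  have hloga : Nat.log p a = 0 := Nat.log_eq_zero_iff.mpr (Or.inl ha)
  have hfa : f ((a : ℕ) : PadicInt p) = bf a := by
    have h1 := hbf a
    rw [vdpB, if_pos ha, hloga, pow_zero, one_mul] at h1
    exact h1.symm
  have hg0 : bf a = (r1 : PadicInt p) + (p : PadicInt p) * g 0 := by
    have h1 := hnat 0
    rw [Nat.mul_zero, Nat.add_zero, hfa] at h1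
    simpa using h1
  -- key identity for 1 ≤ n < p
  have keylt : ∀ n : ℕ, 1 ≤ n → n < p → g ((n : ℕ) : PadicInt p) = g 0 + bf (a + p * n) := by
    intro n hn1 hnp
    have hge : p ≤ a + p * n := by
      have : p * 1 ≤ p * n := Nat.mul_le_mul_left p hn1
      omega
    have hlogn : Nat.log p n = 0 := Nat.log_eq_zero_iff.mpr (Or.inl hnp)
    have hlog : Nat.log p (a + p * n) = 1 := by
      rw [log_a_add_pn a n ha hn1, hlogn]
    have hmodd : (a + p * n) % p ^ Nat.log p (a + p * n) = a := by
      rw [mod_a_add_pn a n ha hn1, hlogn, pow_zero, Nat.mod_one, Nat.mul_zero, Nat.add_zero]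
    have e2 : vdpB p f (a + p * n) = f ((a + p * n : ℕ) : PadicInt p) - f ((a : ℕ) : PadicInt p) := by
      rw [vdpB, if_neg (by omega), hmodd]
    have e3 := hbf (a + p * n)
    rw [e2, hlog, pow_one, hnat n, hfa, hg0] at e3
    have e4 : (p : PadicInt p) ^ 1 * bf (a + p * n)
        = (p : PadicInt p) ^ 1 * (g ((n : ℕ) : PadicInt p) - g 0) := by
      rw [pow_one]
      linear_combination e3
    have := cancel_ppow e4
    linear_combination -this
  -- key identity for p ≤ n
  have keyge : ∀ n : ℕ, p ≤ n →
      (p : PadicInt p) ^ Nat.log p n * bf (a + p * n) = vdpB p g n := by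
    intro n hnp
    have hn1 : 1 ≤ n := le_trans hp.out.one_lt.le hnp
    have hge : p ≤ a + p * n := by
      have : p * 1 ≤ p * n := Nat.mul_le_mul_left p hn1
      omega
    have hlog : Nat.log p (a + p * n) = Nat.log p n + 1 := log_a_add_pn a n ha hn1
    have e2 : vdpB p f (a + p * n)
        = f ((a + p * n : ℕ) : PadicInt p)
          - f ((a + p * (n % p ^ Nat.log p n) : ℕ) : PadicInt p) := by
      rw [vdpB, if_neg (by omega), mod_a_add_pn a n ha hn1]
    have e3 := hbf (a + p * n)
    rw [e2, hlog, hnat n, hnat (n % p ^ Nat.log p n)] at e3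
    have e5 : vdpB p g n = g ((n : ℕ) : PadicInt p) - g ((n % p ^ Nat.log p n : ℕ) : PadicInt p) := by
      rw [vdpB, if_neg (by omega)]
    have e4 : (p : PadicInt p) ^ 1 * ((p : PadicInt p) ^ Nat.log p n * bf (a + p * n))
        = (p : PadicInt p) ^ 1 * vdpB p g n := by
      rw [pow_one, e5]
      ring_nf
      ring_nf at e3
      linear_combination e3
    exact cancel_ppow e4
  -- the coefficient sequence for g
  refine ⟨fun n => if n = 0 then g 0 else if n < p then g 0 + bf (a + p * n) else bf (a + p * n),
    ?_, ?_, ?_⟩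
  · intro n
    by_cases h0 : n = 0
    · subst h0
      simp only [if_pos rfl]
      rw [Nat.log_zero_right, pow_zero, one_mul, vdpB]
      simp [hp.out.pos]
    by_cases hnp : n < p
    · simp only [if_neg h0, if_pos hnp]
      rw [Nat.log_eq_zero_iff.mpr (Or.inl hnp), pow_zero, one_mul, vdpB, if_pos hnp]
      exact (keylt n (by omega) hnp).symm
    · simp only [if_neg h0, if_neg hnp]
      exact keyge n (by omega)
  · -- membership in Aset (s+1) for n < p
    obtain ⟨qa, hqaA, hqa⟩ := hA a ha
    set q0 : ℚ := (qa - (r1 : ℚ)) / (p : ℚ) with hq0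
    have hpQ : ((p : ℕ) : ℚ_[p]) ≠ 0 := Nat.cast_ne_zero.mpr hp.out.ne_zero
    have hg0Q : ((g 0 : PadicInt p) : ℚ_[p]) = (q0 : ℚ_[p]) := by
      rw [hq0]
      push_cast
      rw [eq_div_iff hpQ]
      have h2 : ((bf a : PadicInt p) : ℚ_[p])
          = ((r1 : ℕ) : ℚ_[p]) + ((p : ℕ) : ℚ_[p]) * ((g 0 : PadicInt p) : ℚ_[p]) := by
        exact_mod_cast congrArg (fun z : PadicInt p => (z : ℚ_[p])) hg0
      rw [hqa] at h2
      linear_combination -h2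
    have hcop : q0.den.Coprime p := by
      apply den_coprime
      rw [← hg0Q]
      rw [PadicInt.padic_norm_e_of_padicInt]
      exact PadicInt.norm_le_one _
    intro n hnp
    by_cases h0 : n = 0
    · subst h0
      refine ⟨q0, ?_, ?_⟩
      · show q0 ∈ Aset p l m (s + 1)
        refine ⟨qa, hqaA, 0, zero_mem_Pset p l m hp.out.pos, (r1 : ℤ), by positivity,
          by exact_mod_cast hr1, ?_, ?_⟩
        · have hc : ((r1 : ℤ) : ℚ) = (r1 : ℚ) := by push_cast; ring
          rw [hc]
          exact hcop
        · rw [hq0]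
          push_cast
          ring
      · simpa using hg0Q
    · obtain ⟨qn, hqnP, hqn⟩ := hPp (a + p * n) (by
        have : p * 1 ≤ p * n := Nat.mul_le_mul_left p (by omega)
        omega)
      refine ⟨q0 + qn, ?_, ?_⟩
      · show q0 + qn ∈ Aset p l m (s + 1)
        refine ⟨qa, hqaA, qn, hqnP, (r1 : ℤ), by positivity, by exact_mod_cast hr1, ?_, ?_⟩
        · have hc : ((r1 : ℤ) : ℚ) = (r1 : ℚ) := by push_cast; ring
          rw [hc]
          exact hcop
        · rw [hq0]
          push_cast
          ring
      · simp only [if_neg h0, if_pos hnp]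
        push_cast
        rw [← hg0Q, ← hqn]
  · intro n hnp
    obtain ⟨qn, hqnP, hqn⟩ := hPp (a + p * n) (by
      have : p * 1 ≤ p * n := Nat.mul_le_mul_left p (le_trans hp.out.one_lt.le hnp)
      omega)
    refine ⟨qn, hqnP, ?_⟩
    simp only [if_neg (by omega : ¬ n = 0), if_neg (by omega : ¬ n < p)]
    exact hqn

lemma good_section {l m : ℕ} :
    ∀ k : ℕ, ∀ f : PadicInt p → PadicInt p, (∀ x y, ‖f x - f y‖ ≤ ‖x - y‖) →
      ∀ s : ℕ, GoodC p l m f s → ∀ m' : ℕ, m' < p ^ k →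
        ∀ h, IsSection p f h k m' → GoodC p l m h (s + k) := by
  intro k
  induction k with
  | zero =>
    intro f hf s hg m' hm' h hs
    obtain ⟨r, hr, hre⟩ := hs
    rw [pow_zero] at hr hm'
    have hr0 : r = 0 := by omega
    have hm0 : m' = 0 := by omega
    have hfy : ∀ y, f y = h y := by
      intro y
      have h1 := hre y
      rw [hr0, hm0] at h1
      simpa using h1
    rw [Nat.add_zero, ← funext hfy]
    exact hg
  | succ k ih =>
    intro f hf s hg m' hm' h hs
    obtain ⟨g, hg1, hgk⟩ := section_decompose hf hs
    have hglip := isSection_lip hf hg1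
    have hgood' : GoodC p l m g (s + 1) := good_step (Nat.mod_lt m' hp.out.pos) hg hg1
    have ht : m' / p < p ^ k := by
      rw [Nat.div_lt_iff_lt_mul hp.out.pos]
      rw [pow_succ] at hm'
      exact hm'
    have h2 := ih g hglip (s + 1) hgood' (m' / p) ht h hgk
    rwa [show s + 1 + k = s + (k + 1) by omega] at h2

/-- If all reduced van der Put coefficients of a 1-Lipschitz `f : ℤ_p → ℤ_p` come from
rationals in `P^{l,m}`, then for every vertex `(k, m')` the first `p` reduced van der
Put coefficients of the section of `f` there come from rationals in `A^{l,m}_k`. -/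
theorem first_level_coefficients_in_A (p : ℕ) [Fact p.Prime] (l m : ℕ) (hm : 1 ≤ m)
    (f : PadicInt p → PadicInt p)
    (hf : ∀ x y : PadicInt p, ‖f x - f y‖ ≤ ‖x - y‖)
    -- `bf` is the sequence of reduced van der Put coefficients of `f`
    (bf : ℕ → PadicInt p)
    (hbf : ∀ n : ℕ, (p : PadicInt p) ^ Nat.log p n * bf n = vdpB p f n)
    (hP : ∀ n : ℕ, ∃ q ∈ Pset p l m, (bf n : ℚ_[p]) = (q : ℚ_[p])) :
    ∀ k m' : ℕ, m' < p ^ k →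
      ∀ h : PadicInt p → PadicInt p, IsSection p f h k m' →
        ∀ bh : ℕ → PadicInt p,
          (∀ n : ℕ, (p : PadicInt p) ^ Nat.log p n * bh n = vdpB p h n) →
          ∀ i : ℕ, i < p → ∃ q ∈ Aset p l m k, (bh i : ℚ_[p]) = (q : ℚ_[p]) := by
  intro k m' hm' h hs bh hbh i hi
  have hgood : GoodC p l m f 0 :=
    ⟨bf, hbf, fun n _ => by simpa [Aset] using hP n, fun n _ => hP n⟩
  obtain ⟨bh', h1, h2, h3⟩ := good_section k f hf 0 hgood m' hm' h hs
  rw [zero_add] at h2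
  have heq : bh i = bh' i := cancel_ppow (by rw [hbh i, h1 i])
  rw [heq]
  exact h2 i hi
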